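/- Let n ≥ 2 and let x₁, x₂, x₃ ∈ ℤ with x₁ + x₂ + x₃ ≡ 0 (mod n). Then there exists an integer k ∈ [1, n−1] with gcd(k, n) = 1 such that (k·x₁)_n + (k·x₂)_n + (k·x₃)_n ≤ n. -/

import Mathlib

theorem stmt_7 (n : ℕ) (hn : 2 ≤ n) (x₁ x₂ x₃ : ℤ)
    (hsum : (n : ℤ) ∣ (x₁ + x₂ + x₃)) :
    ∃ k : ℕ, 1 ≤ k ∧ k ≤ n - 1 ∧ Nat.gcd k n = 1 ∧
      ((k : ℤ) * x₁) % n + ((k : ℤ) * x₂) % n + ((k : ℤ) * x₃) % n ≤ n := by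
  have hNpos : (0 : ℤ) < (n : ℤ) := by exact_mod_cast (by omega : 0 < n)
  set N : ℤ := (n : ℤ) with hN
  set a := x₁ % N with ha
  set b := x₂ % N with hb
  set c := x₃ % N with hc
  have ha0 : 0 ≤ a := Int.emod_nonneg _ (by omega)
  have hb0 : 0 ≤ b := Int.emod_nonneg _ (by omega)
  have hc0 : 0 ≤ c := Int.emod_nonneg _ (by omega)
  have ha1 : a < N := Int.emod_lt_of_pos _ hNpos
  have hb1 : b < N := Int.emod_lt_of_pos _ hNpos
  have hc1 : c < N := Int.emod_lt_of_pos _ hNpos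
  have hdvd : N ∣ (a + b + c) := by
    have e1 : a ≡ x₁ [ZMOD N] := Int.emod_emod_of_dvd x₁ dvd_rfl
    have e2 : b ≡ x₂ [ZMOD N] := Int.emod_emod_of_dvd x₂ dvd_rfl
    have e3 : c ≡ x₃ [ZMOD N] := Int.emod_emod_of_dvd x₃ dvd_rfl
    exact Int.modEq_zero_iff_dvd.mp (((e1.add e2).add e3).trans
      (Int.modEq_zero_iff_dvd.mpr hsum))
  by_cases hle : a + b + c ≤ N
  · exact ⟨1, le_refl _, by omega, Nat.gcd_one_left n, by simpa using hle⟩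
  · push_neg at hle
    obtain ⟨m, hm⟩ := hdvd
    have hm2 : m = 2 := by nlinarith
    rw [hm2] at hm
    have hsum2 : a + b + c = 2 * N := by linarith
    have ha' : 0 < a := by omega
    have hb' : 0 < b := by omega
    have hc' : 0 < c := by omega
    have hcast : ((n - 1 : ℕ) : ℤ) = N - 1 := by
      push_cast [Nat.cast_sub (by omega : 1 ≤ n)]; ring
    have key : ∀ x : ℤ, 0 < x % N → ((N - 1) * x) % N = N - x % N := by
      intro x hx
      have hlt := Int.emod_lt_of_pos x hNpos
      have h1 : (N - 1) * x % N = (-x) % N := by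
        have : (N - 1) * x = -x + x * N := by ring
        rw [this, Int.add_mul_emod_self_right]
      have h2 : (N - x % N) % N = (-x) % N := by
        have := (Int.modEq_zero_iff_dvd.mpr (dvd_refl N)).sub
          (Int.emod_emod_of_dvd x (dvd_refl N))
        exact (by simpa using this : N - x % N ≡ -x [ZMOD N])
      rw [h1, ← h2, Int.emod_eq_of_lt (by omega) (by omega)]
    refine ⟨n - 1, by omega, le_refl _, ?_, ?_⟩
    · have h : n - 1 + 1 = n := by omega
      rw [← h]; exact Nat.coprime_self_add_right.mpr (Nat.coprime_one_right _)
    · rw [hcast, key x₁ ha', key x₂ hb', key x₃ hc']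
      omega
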